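/- Let (X, d) be a metric space with basepoint x₀, and define the pseudometric ρ on π₁(X, x₀) by ρ([ζ],[η]) = inf{ diam(ξ) : ξ a loop based at x₀ with [ξ] = [ζ⁻·η] }. Then the topology induced by ρ on π₁(X, x₀) coincides with the whisker topology; consequently, if X is metrizable then π₁^wh(X, x₀) is pseudometrizable. -/

import Mathlib

open Set TopologicalSpace

attribute [local instance] Path.Homotopic.setoid

universe u v

variable {X : Type u} [TopologicalSpace X]

/-- The basic whisker-topology set `B([ζ],U)`: all classes of the form `[ζ·η]`
where `η` is a loop based at `x₀` with image in `U`. -/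
def whiskerB {x₀ : X} (ζ : Path.Homotopic.Quotient x₀ x₀) (U : Set X) :
    Set (Path.Homotopic.Quotient x₀ x₀) :=
  {g | ∃ η : Path x₀ x₀, Set.range η ⊆ U ∧ g = Path.Homotopic.Quotient.trans ζ (Quotient.mk (Path.Homotopic.setoid x₀ x₀) η)}

/-- The whisker topology on `π₁(X, x₀)`, generated by the basic sets `B([ζ],U)`
for `U` an open neighborhood of `x₀`. -/
def whiskerTopology (x₀ : X) : TopologicalSpace (Path.Homotopic.Quotient x₀ x₀) :=
  TopologicalSpace.generateFrom
    {S | ∃ (ζ : Path.Homotopic.Quotient x₀ x₀) (U : Set X),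
      IsOpen U ∧ x₀ ∈ U ∧ S = whiskerB ζ U}

/-- Inversion `[ζ] ↦ [ζ⁻]` on `π₁(X, x₀)`. -/
def whiskerInv {x₀ : X} : Path.Homotopic.Quotient x₀ x₀ → Path.Homotopic.Quotient x₀ x₀ :=
  Quotient.map Path.symm (fun _ _ h => Nonempty.map Path.Homotopy.symm₂ h)

/-- `π₁^wh(X, x₀)` is a topological group: the multiplication `([ζ],[η]) ↦ [ζ·η]`
is jointly continuous and inversion `[ζ] ↦ [ζ⁻]` is continuous, with respect to
the whisker topology. -/
def IsWhiskerTopGroup (x₀ : X) : Prop :=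
  letI := whiskerTopology x₀
  Continuous (fun p : Path.Homotopic.Quotient x₀ x₀ × Path.Homotopic.Quotient x₀ x₀ =>
    Path.Homotopic.Quotient.trans p.1 p.2) ∧
  Continuous (whiskerInv (x₀ := x₀))

/-- The whisker pseudometric on `π₁(X, x₀)`:
`ρ([ζ],[η]) = inf { diam ξ : ξ a loop based at x₀ with [ξ] = [ζ⁻·η] }`. -/
noncomputable def whiskerDist {X : Type u} [MetricSpace X] {x₀ : X}
    (a b : Path.Homotopic.Quotient x₀ x₀) : ℝ :=
  sInf {r : ℝ | ∃ ξ : Path x₀ x₀,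
    Metric.diam (Set.range ⇑ξ) = r ∧ Path.Homotopic.Quotient.trans (whiskerInv a) b = Quotient.mk (Path.Homotopic.setoid x₀ x₀) ξ}

namespace WhiskerAux

section Alg
variable {x₀ : X}

lemma comp_lift {Z : Type*} [TopologicalSpace Z] {z₀ z₁ z₂ : Z} (P : Path z₀ z₁) (Q : Path z₁ z₂) :
    (Quotient.mk (Path.Homotopic.setoid _ _) (P.trans Q) : Path.Homotopic.Quotient z₀ z₂) =
      Path.Homotopic.Quotient.trans (Quotient.mk (Path.Homotopic.setoid _ _) P)
        (Quotient.mk (Path.Homotopic.setoid _ _) Q) := rfl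

lemma comp_assoc (a b c : Path.Homotopic.Quotient x₀ x₀) :
    (a.trans b).trans c = a.trans (b.trans c) := by
  induction a using Quotient.inductionOn with | _ p =>
  induction b using Quotient.inductionOn with | _ q =>
  induction c using Quotient.inductionOn with | _ r =>
  exact Quotient.sound ⟨Path.Homotopy.transAssoc p q r⟩

lemma comp_refl (a : Path.Homotopic.Quotient x₀ x₀) : a.trans (Quotient.mk (Path.Homotopic.setoid _ _) (Path.refl x₀)) = a := by
  induction a using Quotient.inductionOn with | _ p =>
  exact Quotient.sound ⟨Path.Homotopy.transRefl p⟩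

lemma refl_comp (a : Path.Homotopic.Quotient x₀ x₀) :
    Path.Homotopic.Quotient.trans (Quotient.mk (Path.Homotopic.setoid _ _) (Path.refl x₀)) a = a := by
  induction a using Quotient.inductionOn with | _ p =>
  exact Quotient.sound ⟨Path.Homotopy.reflTrans p⟩

lemma inv_comp_self (a : Path.Homotopic.Quotient x₀ x₀) :
    (whiskerInv a).trans a = (Quotient.mk (Path.Homotopic.setoid _ _) (Path.refl x₀)) := by
  induction a using Quotient.inductionOn with | _ p =>
  exact Quotient.sound ⟨(Path.Homotopy.reflSymmTrans p).symm⟩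

lemma self_comp_inv (a : Path.Homotopic.Quotient x₀ x₀) :
    a.trans (whiskerInv a) = (Quotient.mk (Path.Homotopic.setoid _ _) (Path.refl x₀)) := by
  induction a using Quotient.inductionOn with | _ p =>
  exact Quotient.sound ⟨(Path.Homotopy.reflTransSymm p).symm⟩

lemma inv_comp_cancel (a q : Path.Homotopic.Quotient x₀ x₀) :
    (whiskerInv a).trans (a.trans q) = q := by
  rw [← comp_assoc, inv_comp_self, refl_comp]

lemma comp_inv_cancel (a q : Path.Homotopic.Quotient x₀ x₀) :
    a.trans ((whiskerInv a).trans q) = q := by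
  rw [← comp_assoc, self_comp_inv, refl_comp]

lemma inv_eq_iff {a b : Path.Homotopic.Quotient x₀ x₀} {ξ : Path x₀ x₀} :
    (whiskerInv a).trans b = (Quotient.mk (Path.Homotopic.setoid _ _) ξ) ↔ b = a.trans (Quotient.mk (Path.Homotopic.setoid _ _) ξ) := by
  constructor
  · intro h; rw [← h, comp_inv_cancel]
  · intro h; rw [h]; exact inv_comp_cancel _ _

lemma symm_rep {a b : Path.Homotopic.Quotient x₀ x₀} {ξ : Path x₀ x₀}
    (h : (whiskerInv a).trans b = (Quotient.mk (Path.Homotopic.setoid _ _) ξ)) : (whiskerInv b).trans a = (Quotient.mk (Path.Homotopic.setoid _ _) (ξ.symm)) := by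
  rw [inv_eq_iff] at h ⊢
  have hrt : ((Quotient.mk (Path.Homotopic.setoid _ _) (ξ.trans ξ.symm)) : Path.Homotopic.Quotient x₀ x₀) = (Quotient.mk (Path.Homotopic.setoid _ _) (Path.refl x₀)) :=
    Quotient.sound ⟨(Path.Homotopy.reflTransSymm ξ).symm⟩
  rw [h]; exact ((comp_assoc _ _ _).trans ((congrArg a.trans hrt).trans (comp_refl a))).symm

lemma triangle_rep {a b c : Path.Homotopic.Quotient x₀ x₀} {ξ₁ ξ₂ : Path x₀ x₀}
    (h₁ : (whiskerInv a).trans b = (Quotient.mk (Path.Homotopic.setoid _ _) ξ₁)) (h₂ : (whiskerInv b).trans c = (Quotient.mk (Path.Homotopic.setoid _ _) ξ₂)) :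
    (whiskerInv a).trans c = (Quotient.mk (Path.Homotopic.setoid _ _) (ξ₁.trans ξ₂)) := by
  rw [inv_eq_iff] at h₁ h₂ ⊢
  rw [h₂, h₁]; exact comp_assoc _ _ _

end Alg

lemma isOpen_generateFrom_of_forall {α : Type v} {G : Set (Set α)} {s : Set α}
    (h : ∀ x ∈ s, ∃ g ∈ G, x ∈ g ∧ g ⊆ s) : TopologicalSpace.GenerateOpen G s := by
  have hs : s = ⋃₀ {g | g ∈ G ∧ g ⊆ s} := by
    apply subset_antisymm
    · intro x hx
      obtain ⟨g, hg, hxg, hgs⟩ := h x hx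
      exact ⟨g, ⟨hg, hgs⟩, hxg⟩
    · exact sUnion_subset fun g hg => hg.2
  rw [hs]
  exact TopologicalSpace.GenerateOpen.sUnion _ fun g hg => .basic g hg.1

section Metric
variable {Y : Type u} [MetricSpace Y] {y₀ : Y}

lemma dset_nonempty (a b : Path.Homotopic.Quotient y₀ y₀) :
    {r : ℝ | ∃ ξ : Path y₀ y₀,
      Metric.diam (Set.range ⇑ξ) = r ∧ (whiskerInv a).trans b = (Quotient.mk (Path.Homotopic.setoid _ _) ξ)}.Nonempty := by
  obtain ⟨ξ, hξ⟩ := Quotient.exists_rep ((whiskerInv a).trans b)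
  exact ⟨_, ξ, rfl, hξ.symm⟩

lemma dset_bdd (a b : Path.Homotopic.Quotient y₀ y₀) :
    BddBelow {r : ℝ | ∃ ξ : Path y₀ y₀,
      Metric.diam (Set.range ⇑ξ) = r ∧ (whiskerInv a).trans b = (Quotient.mk (Path.Homotopic.setoid _ _) ξ)} :=
  ⟨0, by rintro r ⟨ξ, rfl, -⟩; exact Metric.diam_nonneg⟩

lemma whiskerDist_nonneg (a b : Path.Homotopic.Quotient y₀ y₀) : 0 ≤ whiskerDist a b :=
  Real.sInf_nonneg (by rintro r ⟨ξ, rfl, -⟩; exact Metric.diam_nonneg)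

lemma whiskerDist_le {a b : Path.Homotopic.Quotient y₀ y₀} {ξ : Path y₀ y₀}
    (h : (whiskerInv a).trans b = (Quotient.mk (Path.Homotopic.setoid _ _) ξ)) : whiskerDist a b ≤ Metric.diam (Set.range ⇑ξ) :=
  csInf_le (dset_bdd a b) ⟨ξ, rfl, h⟩

lemma exists_rep_lt {a b : Path.Homotopic.Quotient y₀ y₀} {ε : ℝ}
    (h : whiskerDist a b < ε) :
    ∃ ξ : Path y₀ y₀, (whiskerInv a).trans b = (Quotient.mk (Path.Homotopic.setoid _ _) ξ) ∧ Metric.diam (Set.range ⇑ξ) < ε := by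
  obtain ⟨r, ⟨ξ, hd, hr⟩, hlt⟩ := exists_lt_of_csInf_lt (dset_nonempty a b) h
  exact ⟨ξ, hr, hd ▸ hlt⟩

lemma whiskerDist_self (a : Path.Homotopic.Quotient y₀ y₀) : whiskerDist a a = 0 := by
  refine le_antisymm ?_ (whiskerDist_nonneg a a)
  have h := whiskerDist_le (inv_comp_self a)
  have : Metric.diam (Set.range ⇑(Path.refl y₀)) = 0 := by
    have : Set.range ⇑(Path.refl y₀) = {y₀} := by
      ext z; simp [Path.refl_apply, eq_comm]
    rw [this, Metric.diam_singleton]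
  rwa [this] at h

lemma whiskerDist_comm_le (a b : Path.Homotopic.Quotient y₀ y₀) :
    whiskerDist b a ≤ whiskerDist a b := by
  refine le_of_forall_pos_le_add fun θ hθ => ?_
  obtain ⟨ξ, h, hd⟩ := exists_rep_lt (lt_add_of_pos_right (whiskerDist a b) hθ)
  calc whiskerDist b a ≤ Metric.diam (Set.range ⇑ξ.symm) := whiskerDist_le (symm_rep h)
    _ = Metric.diam (Set.range ⇑ξ) := by rw [Path.symm_range]
    _ ≤ whiskerDist a b + θ := hd.le

lemma whiskerDist_comm (a b : Path.Homotopic.Quotient y₀ y₀) :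
    whiskerDist a b = whiskerDist b a :=
  le_antisymm (whiskerDist_comm_le b a) (whiskerDist_comm_le a b)

lemma whiskerDist_triangle (a b c : Path.Homotopic.Quotient y₀ y₀) :
    whiskerDist a c ≤ whiskerDist a b + whiskerDist b c := by
  refine le_of_forall_pos_le_add fun θ hθ => ?_
  obtain ⟨ξ₁, h₁, hd₁⟩ := exists_rep_lt (lt_add_of_pos_right (whiskerDist a b) (half_pos hθ))
  obtain ⟨ξ₂, h₂, hd₂⟩ := exists_rep_lt (lt_add_of_pos_right (whiskerDist b c) (half_pos hθ))
  have hmem : (Set.range ⇑ξ₁ ∩ Set.range ⇑ξ₂).Nonempty :=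
    ⟨y₀, ⟨0, ξ₁.source⟩, ⟨0, ξ₂.source⟩⟩
  calc whiskerDist a c ≤ Metric.diam (Set.range ⇑(ξ₁.trans ξ₂)) :=
        whiskerDist_le (triangle_rep h₁ h₂)
    _ = Metric.diam (Set.range ⇑ξ₁ ∪ Set.range ⇑ξ₂) := by rw [Path.trans_range]
    _ ≤ Metric.diam (Set.range ⇑ξ₁) + Metric.diam (Set.range ⇑ξ₂) := Metric.diam_union' hmem
    _ ≤ whiskerDist a b + whiskerDist b c + θ := by linarith

lemma range_subset_ball {ξ : Path y₀ y₀} {ε : ℝ} (hd : Metric.diam (Set.range ⇑ξ) < ε) :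
    Set.range ⇑ξ ⊆ Metric.ball y₀ ε := by
  rintro _ ⟨t, rfl⟩
  have hb : Bornology.IsBounded (Set.range ⇑ξ) := (isCompact_range ξ.continuous).isBounded
  exact lt_of_le_of_lt (Metric.dist_le_diam_of_mem hb ⟨t, rfl⟩ ⟨0, ξ.source⟩) hd

lemma mem_whiskerB_self {U : Set Y} (hU : y₀ ∈ U) (b : Path.Homotopic.Quotient y₀ y₀) :
    b ∈ whiskerB b U :=
  ⟨Path.refl y₀, by rintro _ ⟨t, rfl⟩; simpa using hU, (comp_refl b).symm⟩

lemma whiskerB_subset_ball (b : Path.Homotopic.Quotient y₀ y₀) {ε : ℝ} (hε : 0 < ε) :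
    whiskerB b (Metric.ball y₀ (ε / 3)) ⊆ {c | whiskerDist b c < ε} := by
  rintro c ⟨η, hη, rfl⟩
  have h : (whiskerInv b).trans (b.trans (Quotient.mk (Path.Homotopic.setoid _ _) η)) = (Quotient.mk (Path.Homotopic.setoid _ _) η) := inv_comp_cancel b _
  have hd : Metric.diam (Set.range ⇑η) ≤ 2 * (ε / 3) :=
    (Metric.diam_mono hη Metric.isBounded_ball).trans (Metric.diam_ball (by positivity))
  have := whiskerDist_le h
  simp only [Set.mem_setOf_eq]
  linarith

lemma ball_subset_whiskerB {ζ b : Path.Homotopic.Quotient y₀ y₀} {U : Set Y} {ε : ℝ}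
    (hb : b ∈ whiskerB ζ U) (hUε : Metric.ball y₀ ε ⊆ U) :
    {c | whiskerDist b c < ε} ⊆ whiskerB ζ U := by
  obtain ⟨η, hη, rfl⟩ := hb
  intro c hc
  obtain ⟨ξ, h, hd⟩ := exists_rep_lt hc
  refine ⟨η.trans ξ, ?_, ?_⟩
  · rw [Path.trans_range]
    exact union_subset hη ((range_subset_ball hd).trans hUε)
  · rw [inv_eq_iff] at h
    rw [h]; exact comp_assoc _ _ _

end Metric
end WhiskerAux

namespace WhiskerAux
section Metric2
variable {Y : Type u} [MetricSpace Y] {y₀ : Y}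

lemma ballProp {s : Set (Path.Homotopic.Quotient y₀ y₀)}
    (hs : TopologicalSpace.GenerateOpen
      {S | ∃ (a : Path.Homotopic.Quotient y₀ y₀) (ε : ℝ), 0 < ε ∧
        S = {b | whiskerDist a b < ε}} s) :
    ∀ x ∈ s, ∃ ε > 0, ∀ y, whiskerDist x y < ε → y ∈ s := by
  induction hs with
  | basic g hg =>
    obtain ⟨a, ε, hε, rfl⟩ := hg
    intro x hx
    simp only [mem_setOf_eq] at hx
    refine ⟨ε - whiskerDist a x, by linarith, fun y hy => ?_⟩
    simp only [mem_setOf_eq]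
    have := whiskerDist_triangle a x y
    linarith
  | univ => exact fun x _ => ⟨1, one_pos, fun _ _ => trivial⟩
  | inter u v _ _ ihu ihv =>
    intro x hx
    obtain ⟨ε₁, h1, H1⟩ := ihu x hx.1
    obtain ⟨ε₂, h2, H2⟩ := ihv x hx.2
    exact ⟨min ε₁ ε₂, lt_min h1 h2, fun y hy =>
      ⟨H1 y (hy.trans_le (min_le_left _ _)), H2 y (hy.trans_le (min_le_right _ _))⟩⟩
  | sUnion S _ ih =>
    rintro x ⟨t, htS, hxt⟩
    obtain ⟨ε, hε, H⟩ := ih t htS x hxt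
    exact ⟨ε, hε, fun y hy => ⟨t, htS, H y hy⟩⟩

end Metric2
end WhiskerAux


/-- The topology induced by the pseudometric `ρ` on `π₁(X, x₀)` (generated by
the open `ρ`-balls) coincides with the whisker topology; consequently, when `X` is
metrizable, `π₁^wh(X, x₀)` is pseudometrizable. -/
theorem whiskerDist_induces_whiskerTopology {X : Type u} [MetricSpace X] (x₀ : X) :
    whiskerTopology x₀ = TopologicalSpace.generateFrom
      {S : Set (Path.Homotopic.Quotient x₀ x₀) |
        ∃ (a : Path.Homotopic.Quotient x₀ x₀) (ε : ℝ), 0 < ε ∧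
          S = {b | whiskerDist a b < ε}} ∧
    ∃ m : PseudoMetricSpace (Path.Homotopic.Quotient x₀ x₀),
      m.toUniformSpace.toTopologicalSpace = whiskerTopology x₀ := by
  have part1 : whiskerTopology x₀ = TopologicalSpace.generateFrom
      {S : Set (Path.Homotopic.Quotient x₀ x₀) |
        ∃ (a : Path.Homotopic.Quotient x₀ x₀) (ε : ℝ), 0 < ε ∧
          S = {b | whiskerDist a b < ε}} := by
    apply le_antisymm
    · apply le_generateFrom
      rintro S ⟨a, ε, hε, rfl⟩
      show TopologicalSpace.GenerateOpen _ _
      apply WhiskerAux.isOpen_generateFrom_of_forall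
      intro x hx
      simp only [Set.mem_setOf_eq] at hx
      refine ⟨whiskerB x (Metric.ball x₀ ((ε - whiskerDist a x) / 3)),
        ⟨x, _, Metric.isOpen_ball, Metric.mem_ball_self (by linarith), rfl⟩,
        WhiskerAux.mem_whiskerB_self (Metric.mem_ball_self (by linarith)) x, ?_⟩
      intro c hc
      have h2 := WhiskerAux.whiskerB_subset_ball x
        (show (0:ℝ) < ε - whiskerDist a x by linarith) hc
      simp only [Set.mem_setOf_eq] at h2 ⊢
      have ht := WhiskerAux.whiskerDist_triangle a x c
      linarith
    · show TopologicalSpace.generateFrom _ ≤ TopologicalSpace.generateFrom _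
      apply le_generateFrom
      rintro S ⟨ζ, U, hU, hx₀U, rfl⟩
      show TopologicalSpace.GenerateOpen _ _
      apply WhiskerAux.isOpen_generateFrom_of_forall
      intro b hb
      obtain ⟨ε, hε, hUε⟩ := Metric.isOpen_iff.mp hU x₀ hx₀U
      refine ⟨{c | whiskerDist b c < ε}, ⟨b, ε, hε, rfl⟩, ?_,
        WhiskerAux.ball_subset_whiskerB hb hUε⟩
      simp only [Set.mem_setOf_eq, WhiskerAux.whiskerDist_self]
      exact hε
  refine ⟨part1, ?_⟩
  letI := whiskerTopology x₀
  refine ⟨PseudoMetricSpace.ofDistTopology whiskerDist WhiskerAux.whiskerDist_self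
    WhiskerAux.whiskerDist_comm WhiskerAux.whiskerDist_triangle fun s => ?_, rfl⟩
  constructor
  · intro hs
    have hs' : TopologicalSpace.GenerateOpen
        {S : Set (Path.Homotopic.Quotient x₀ x₀) |
          ∃ (a : Path.Homotopic.Quotient x₀ x₀) (ε : ℝ), 0 < ε ∧
            S = {b | whiskerDist a b < ε}} s := by
      have hs2 : (whiskerTopology x₀).IsOpen s := hs
      rw [part1] at hs2
      exact hs2
    exact WhiskerAux.ballProp hs'
  · intro h
    show TopologicalSpace.GenerateOpen _ s
    apply WhiskerAux.isOpen_generateFrom_of_forall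
    intro x hx
    obtain ⟨ε, hε, H⟩ := h x hx
    refine ⟨whiskerB x (Metric.ball x₀ (ε / 3)),
      ⟨x, _, Metric.isOpen_ball, Metric.mem_ball_self (by positivity), rfl⟩,
      WhiskerAux.mem_whiskerB_self (Metric.mem_ball_self (by positivity)) x,
      fun c hc => H c (WhiskerAux.whiskerB_subset_ball x hε hc)⟩
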